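/- arXiv:2210.17329 — 2 statements merged into one kernel-verified Lean document; each statement's English description precedes it below -/
import Mathlib

section
/- For any finitely supported multi-index m and dimension d ≥ 1, Σ_{w ≤ m} C(m,w) · C(|w|+d−1, d−1) · |w|! · |m−w|! = (|m|+d)! / d!. -/
open Finset

/-- Order (total degree) of a finitely supported multi-index. -/
def deg (m : ℕ →₀ ℕ) : ℕ := m.sum fun _ k => k

/-- Multivariate binomial coefficient `C(m, w) = Π_i C(m_i, w_i)`. -/
def mchoose (m w : ℕ →₀ ℕ) : ℕ := ∏ i ∈ m.support, (m i).choose (w i)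

lemma deg_add (u v : ℕ →₀ ℕ) : deg (u + v) = deg u + deg v :=
  Finsupp.sum_add_index' (fun _ => rfl) (fun _ _ _ => rfl)

lemma deg_single (a j : ℕ) : deg (Finsupp.single a j) = j :=
  Finsupp.sum_single_index rfl

/-- Splitting a sum over `Iic (m₁ + m₂)` when the supports are disjoint. -/
lemma sum_Iic_add (m₁ m₂ : ℕ →₀ ℕ) (h : Disjoint m₁.support m₂.support)
    (F : (ℕ →₀ ℕ) → ℕ) :
    ∑ w ∈ Finset.Iic (m₁ + m₂), F w
      = ∑ u ∈ Finset.Iic m₁, ∑ v ∈ Finset.Iic m₂, F (u + v) := by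
  have hdis : ∀ i, m₁ i = 0 ∨ m₂ i = 0 := by
    intro i
    by_cases h1 : m₁ i = 0
    · exact Or.inl h1
    · right
      have := Finset.disjoint_left.mp h (Finsupp.mem_support_iff.mpr h1)
      exact Finsupp.notMem_support_iff.mp this
  rw [← Finset.sum_product']
  refine Finset.sum_nbij' (fun w => (w ⊓ m₁, w ⊓ m₂)) (fun p => p.1 + p.2) ?_ ?_ ?_ ?_ ?_
  · intro w hw
    simp only [Finset.mem_product, Finset.mem_Iic]
    exact ⟨inf_le_right, inf_le_right⟩
  · intro p hp
    simp only [Finset.mem_product, Finset.mem_Iic] at hp ⊢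
    exact add_le_add hp.1 hp.2
  · intro w hw
    rw [Finset.mem_Iic] at hw
    ext i
    have hwi := Finsupp.le_def.mp hw i
    rw [Finsupp.add_apply] at hwi
    simp only [Finsupp.add_apply, Finsupp.inf_apply]
    rcases hdis i with h0 | h0 <;> omega
  · intro p hp
    simp only [Finset.mem_product, Finset.mem_Iic] at hp
    have h1 : ∀ i, p.1 i ≤ m₁ i := Finsupp.le_def.mp hp.1
    have h2 : ∀ i, p.2 i ≤ m₂ i := Finsupp.le_def.mp hp.2
    have e1 : (p.1 + p.2) ⊓ m₁ = p.1 := by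
      ext i
      simp only [Finsupp.inf_apply, Finsupp.add_apply]
      rcases hdis i with h0 | h0
      · have := h1 i; omega
      · have := h2 i; have := h1 i; omega
    have e2 : (p.1 + p.2) ⊓ m₂ = p.2 := by
      ext i
      simp only [Finsupp.inf_apply, Finsupp.add_apply]
      rcases hdis i with h0 | h0
      · have := h1 i; have := h2 i; omega
      · have := h2 i; omega
    rw [e1, e2]
  · intro w hw
    rw [Finset.mem_Iic] at hw
    have : w ⊓ m₁ + w ⊓ m₂ = w := by
      ext i
      have hwi := Finsupp.le_def.mp hw i
      rw [Finsupp.add_apply] at hwi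
      simp only [Finsupp.add_apply, Finsupp.inf_apply]
      rcases hdis i with h0 | h0 <;> omega
    rw [this]

lemma mchoose_add (m₁ m₂ u v : ℕ →₀ ℕ) (h : Disjoint m₁.support m₂.support)
    (hu : u ≤ m₁) (hv : v ≤ m₂) :
    mchoose (m₁ + m₂) (u + v) = mchoose m₁ u * mchoose m₂ v := by
  unfold mchoose
  rw [Finsupp.support_add_eq h, Finset.prod_union h]
  congr 1
  · refine Finset.prod_congr rfl fun i hi => ?_
    have h2 : m₂ i = 0 :=
      Finsupp.notMem_support_iff.mp (Finset.disjoint_left.mp h hi)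
    have hv0 : v i = 0 := by have := Finsupp.le_def.mp hv i; omega
    simp [Finsupp.add_apply, h2, hv0]
  · refine Finset.prod_congr rfl fun i hi => ?_
    have h1 : m₁ i = 0 :=
      Finsupp.notMem_support_iff.mp (Finset.disjoint_right.mp h hi)
    have hu0 : u i = 0 := by have := Finsupp.le_def.mp hu i; omega
    simp [Finsupp.add_apply, h1, hu0]

lemma sum_Iic_single (a b : ℕ) (F : (ℕ →₀ ℕ) → ℕ) :
    ∑ w ∈ Finset.Iic (Finsupp.single a b), F w
      = ∑ j ∈ Finset.range (b + 1), F (Finsupp.single a j) := by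
  refine Finset.sum_nbij' (fun w => w a) (fun j => Finsupp.single a j) ?_ ?_ ?_ ?_ ?_
  · intro w hw
    rw [Finset.mem_Iic] at hw
    have := Finsupp.le_def.mp hw a
    rw [Finsupp.single_eq_same] at this
    simp only [Finset.mem_range]
    omega
  · intro j hj
    rw [Finset.mem_range] at hj
    rw [Finset.mem_Iic, Finsupp.single_le_iff, Finsupp.single_eq_same]
    omega
  · intro w hw
    rw [Finset.mem_Iic] at hw
    ext i
    rcases eq_or_ne i a with rfl | hne
    · rw [Finsupp.single_eq_same]
    · have := Finsupp.le_def.mp hw i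
      rw [Finsupp.single_eq_of_ne' (Ne.symm hne)] at this
      rw [Finsupp.single_eq_of_ne' (Ne.symm hne)]
      omega
  · intro j hj
    exact Finsupp.single_eq_same
  · intro w hw
    rw [Finset.mem_Iic] at hw
    congr 1
    ext i
    rcases eq_or_ne i a with rfl | hne
    · rw [Finsupp.single_eq_same]
    · have := Finsupp.le_def.mp hw i
      rw [Finsupp.single_eq_of_ne' (Ne.symm hne)] at this
      rw [Finsupp.single_eq_of_ne' (Ne.symm hne)]
      omega

lemma mchoose_single (a b j : ℕ) (hb : b ≠ 0) :
    mchoose (Finsupp.single a b) (Finsupp.single a j) = b.choose j := by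
  unfold mchoose
  rw [Finsupp.support_single_ne_zero a hb, Finset.prod_singleton,
    Finsupp.single_eq_same, Finsupp.single_eq_same]

/-- Weighted Vandermonde identity. -/
lemma vand (b t : ℕ) (f : ℕ → ℕ) :
    ∑ j ∈ Finset.range (b + 1), ∑ k ∈ Finset.range (t + 1),
        b.choose j * t.choose k * f (j + k)
      = ∑ s ∈ Finset.range (b + t + 1), (b + t).choose s * f s := by
  set g : ℕ × ℕ → ℕ := fun p => b.choose p.1 * t.choose p.2 * f (p.1 + p.2) with hg
  have hzero : ∀ p : ℕ × ℕ, b < p.1 ∨ t < p.2 → g p = 0 := by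
    rintro p (hp | hp)
    · simp [hg, Nat.choose_eq_zero_of_lt hp]
    · simp [hg, Nat.choose_eq_zero_of_lt hp]
  have hS : ∀ s, s ∈ Finset.range (b + t + 1) →
      Finset.HasAntidiagonal.antidiagonal s ⊆ Finset.range (b + t + 1) ×ˢ Finset.range (b + t + 1) := by
    intro s hs p hp
    rw [Finset.HasAntidiagonal.mem_antidiagonal] at hp
    rw [Finset.mem_range] at hs
    simp only [Finset.mem_product, Finset.mem_range]
    omega
  calc
    ∑ j ∈ Finset.range (b + 1), ∑ k ∈ Finset.range (t + 1),
        b.choose j * t.choose k * f (j + k)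
        = ∑ p ∈ Finset.range (b + 1) ×ˢ Finset.range (t + 1), g p := by
          rw [Finset.sum_product]
    _ = ∑ p ∈ Finset.range (b + t + 1) ×ˢ Finset.range (b + t + 1), g p := by
          refine Finset.sum_subset ?_ ?_
          · intro p hp
            simp only [Finset.mem_product, Finset.mem_range] at hp ⊢
            omega
          · intro p hp hp'
            simp only [Finset.mem_product, Finset.mem_range] at hp hp'
            apply hzero
            omega
    _ = ∑ p ∈ (Finset.range (b + t + 1)).biUnion Finset.HasAntidiagonal.antidiagonal, g p := by
          refine (Finset.sum_subset ?_ ?_).symm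
          · intro p hp
            rw [Finset.mem_biUnion] at hp
            obtain ⟨s, hs, hps⟩ := hp
            exact hS s hs hps
          · intro p hp hp'
            apply hzero
            by_contra hcon
            push_neg at hcon
            apply hp'
            rw [Finset.mem_biUnion]
            refine ⟨p.1 + p.2, ?_, ?_⟩
            · rw [Finset.mem_range]; omega
            · rw [Finset.HasAntidiagonal.mem_antidiagonal]
    _ = ∑ s ∈ Finset.range (b + t + 1), ∑ p ∈ Finset.HasAntidiagonal.antidiagonal s, g p := by
          refine Finset.sum_biUnion ?_
          intro s hs s' hs' hne
          simp only [Function.onFun]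
          rw [Finset.disjoint_left]
          intro p hp hp'
          rw [Finset.HasAntidiagonal.mem_antidiagonal] at hp hp'
          exact hne (hp ▸ hp')
    _ = ∑ s ∈ Finset.range (b + t + 1), (b + t).choose s * f s := by
          refine Finset.sum_congr rfl fun s _ => ?_
          rw [Nat.add_choose_eq, Finset.sum_mul]
          refine Finset.sum_congr rfl fun p hp => ?_
          rw [Finset.HasAntidiagonal.mem_antidiagonal] at hp
          rw [hg]
          simp only
          rw [hp]

/-- Key combinatorial lemma: sums over `Iic m` weighted by `mchoose` collapse
to binomial sums in the degree. -/
lemma sumA (m : ℕ →₀ ℕ) (f : ℕ → ℕ) :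
    ∑ w ∈ Finset.Iic m, mchoose m w * f (deg w)
      = ∑ k ∈ Finset.range (deg m + 1), (deg m).choose k * f k := by
  induction m using Finsupp.induction generalizing f with
  | zero =>
    have h0 : Finset.Iic (0 : ℕ →₀ ℕ) = {0} := by
      ext w
      simp [Finset.mem_Iic, le_zero_iff]
    rw [h0]
    simp [deg, mchoose]
  | single_add a b t ha hb ih =>
    have hdisj : Disjoint (Finsupp.single a b).support t.support := by
      rw [Finsupp.support_single_ne_zero a hb]
      simpa using ha
    rw [sum_Iic_add _ _ hdisj, sum_Iic_single]
    have step : ∀ j ∈ Finset.range (b + 1),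
        (∑ v ∈ Finset.Iic t, mchoose (Finsupp.single a b + t) (Finsupp.single a j + v)
            * f (deg (Finsupp.single a j + v)))
          = ∑ k ∈ Finset.range (deg t + 1), b.choose j * ((deg t).choose k * f (j + k)) := by
      intro j hj
      rw [Finset.mem_range] at hj
      have h1 : ∀ v ∈ Finset.Iic t,
          mchoose (Finsupp.single a b + t) (Finsupp.single a j + v)
              * f (deg (Finsupp.single a j + v))
            = b.choose j * (mchoose t v * f (j + deg v)) := by
        intro v hv
        rw [Finset.mem_Iic] at hv
        have hu : Finsupp.single a j ≤ Finsupp.single a b := by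
          rw [Finsupp.single_le_iff, Finsupp.single_eq_same]; omega
        rw [mchoose_add _ _ _ _ hdisj hu hv, mchoose_single a b j hb, deg_add, deg_single]
        ring
      rw [Finset.sum_congr rfl h1, ← Finset.mul_sum, ih (fun k => f (j + k)), Finset.mul_sum]
    rw [Finset.sum_congr rfl step]
    have hdeg : deg (Finsupp.single a b + t) = b + deg t := by
      rw [deg_add, deg_single]
    rw [hdeg, ← vand b (deg t) f]
    refine Finset.sum_congr rfl fun j _ => Finset.sum_congr rfl fun k _ => by ring

lemma hockey (n e : ℕ) :
    ∑ k ∈ Finset.range (n + 1), (k + e).choose e = (n + e + 1).choose (e + 1) := by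
  induction n with
  | zero => simp
  | succ n ih =>
    rw [Finset.sum_range_succ, ih]
    have h1 : n + 1 + e = n + e + 1 := by omega
    rw [h1, Nat.choose_succ_succ (n + e + 1) e]
    simp only [Nat.succ_eq_add_one]
    omega

lemma sumB (n d : ℕ) (hd : 1 ≤ d) :
    ∑ k ∈ Finset.range (n + 1),
        n.choose k * (Nat.choose (k + d - 1) (d - 1) * (k.factorial * (n - k).factorial))
      = (n + d).factorial / d.factorial := by
  obtain ⟨e, rfl⟩ : ∃ e, d = e + 1 := ⟨d - 1, by omega⟩
  have hterm : ∀ k ∈ Finset.range (n + 1),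
      n.choose k * (Nat.choose (k + (e + 1) - 1) (e + 1 - 1) * (k.factorial * (n - k).factorial))
        = (k + e).choose e * n.factorial := by
    intro k hk
    rw [Finset.mem_range] at hk
    have hk' : k ≤ n := by omega
    have h1 : k + (e + 1) - 1 = k + e := by omega
    have h2 : e + 1 - 1 = e := by omega
    rw [h1, h2, ← Nat.choose_mul_factorial_mul_factorial hk']
    ring
  rw [Finset.sum_congr rfl hterm, ← Finset.sum_mul, hockey n e]
  have key : (n + e + 1).choose (e + 1) * n.factorial * (e + 1).factorial
      = (n + (e + 1)).factorial := by
    have h : e + 1 ≤ n + e + 1 := by omega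
    have := Nat.choose_mul_factorial_mul_factorial h
    have hsub : n + e + 1 - (e + 1) = n := by omega
    rw [hsub] at this
    calc (n + e + 1).choose (e + 1) * n.factorial * (e + 1).factorial
        = (n + e + 1).choose (e + 1) * (e + 1).factorial * n.factorial := by ring
      _ = (n + e + 1).factorial := this
      _ = (n + (e + 1)).factorial := by ring_nf
  refine (Nat.div_eq_of_eq_mul_left (Nat.factorial_pos (e + 1)) ?_).symm
  rw [← key]

theorem stmt_11 (m : ℕ →₀ ℕ) (d : ℕ) (hd : 1 ≤ d) :
    ∑ w ∈ Finset.Iic m,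
        mchoose m w * Nat.choose (deg w + d - 1) (d - 1) *
          Nat.factorial (deg w) * Nat.factorial (deg (m - w))
      = Nat.factorial (deg m + d) / Nat.factorial d := by
  have hrw : ∀ w ∈ Finset.Iic m,
      mchoose m w * Nat.choose (deg w + d - 1) (d - 1) *
          Nat.factorial (deg w) * Nat.factorial (deg (m - w))
        = mchoose m w * (Nat.choose (deg w + d - 1) (d - 1) *
            ((deg w).factorial * (deg m - deg w).factorial)) := by
    intro w hw
    rw [Finset.mem_Iic] at hw
    have hsub : m - w + w = m := tsub_add_cancel_of_le hw
    have hdeg : deg (m - w) + deg w = deg m := by rw [← deg_add, hsub]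
    have : deg (m - w) = deg m - deg w := by omega
    rw [this]
    ring
  rw [Finset.sum_congr rfl hrw,
    sumA m (fun k => Nat.choose (k + d - 1) (d - 1) * (k.factorial * (deg m - k).factorial)),
    sumB (deg m) d hd]
end

section
/- Define Delannoy-type numbers D_2 on finitely supported multi-indices by D_2(0) = 1 and D_2(m) = Σ_{u ⊆ supp(m), 1 ≤ |u| ≤ 2} D_2(m − e_u) for m ≠ 0, where e_u = Σ_{j∈u} e_j. Then D_2(m) ≤ |m|! · a_{|m|} for all m, where a_k = ((1+√3)^{k+1} − (1−√3)^{k+1})/(2^{k+1}√3). -/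
/-- The multi-index `e_u = Σ_{j ∈ u} e_j`. -/
noncomputable def eU (u : Finset ℕ) : ℕ →₀ ℕ := ∑ j ∈ u, Finsupp.single j 1

/-- The sequence `a_k = ((1+√3)^(k+1) − (1−√3)^(k+1)) / (2^(k+1)·√3)`. -/
noncomputable def aSeq (k : ℕ) : ℝ :=
  ((1 + Real.sqrt 3) ^ (k + 1) - (1 - Real.sqrt 3) ^ (k + 1)) /
    (2 ^ (k + 1) * Real.sqrt 3)

noncomputable def bSeq : ℕ → ℝ
  | 0 => 1
  | 1 => 1
  | (k + 2) => bSeq (k + 1) + bSeq k / 2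

lemma bSeq_pos : ∀ k, 0 < bSeq k := by
  intro k
  induction k using Nat.strong_induction_on with
  | _ k ih =>
    match k with
    | 0 => norm_num [bSeq]
    | 1 => norm_num [bSeq]
    | (k + 2) =>
      have h1 := ih (k + 1) (by omega)
      have h2 := ih k (by omega)
      rw [bSeq]; linarith

lemma deg_eq_sum (m : ℕ →₀ ℕ) (S : Finset ℕ) (h : m.support ⊆ S) :
    deg m = ∑ j ∈ S, m j :=
  Finsupp.sum_of_support_subset m h _ (fun _ _ => rfl)

lemma eU_apply (u : Finset ℕ) (j : ℕ) : eU u j = if j ∈ u then 1 else 0 := by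
  classical
  simp [eU, Finsupp.finset_sum_apply, Finsupp.single_apply]

lemma deg_eq_zero {m : ℕ →₀ ℕ} (h : deg m = 0) : m = 0 := by
  ext j
  by_cases hj : j ∈ m.support
  · have h2 := deg_eq_sum m m.support (le_refl _)
    rw [h2] at h
    simpa using Finset.sum_eq_zero_iff.mp h j hj
  · simpa using Finsupp.notMem_support_iff.mp hj

lemma card_support_le_deg (m : ℕ →₀ ℕ) : m.support.card ≤ deg m := by
  rw [deg_eq_sum m m.support (le_refl _)]
  calc m.support.card = ∑ _j ∈ m.support, 1 := by simp
    _ ≤ ∑ j ∈ m.support, m j := Finset.sum_le_sum (fun j hj => by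
        simpa using Nat.one_le_iff_ne_zero.mpr (Finsupp.mem_support_iff.mp hj))

lemma deg_sub (m : ℕ →₀ ℕ) (u : Finset ℕ) (hu : u ⊆ m.support) :
    deg (m - eU u) + u.card = deg m := by
  classical
  have hsupp : (m - eU u).support ⊆ m.support := by
    intro j hj
    simp only [Finsupp.mem_support_iff, Finsupp.tsub_apply] at hj ⊢
    omega
  rw [deg_eq_sum (m - eU u) m.support hsupp, deg_eq_sum m m.support (le_refl _)]
  have hcard : ∑ j ∈ m.support, eU u j = u.card := by
    simp only [eU_apply]
    rw [Finset.sum_ite_mem]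
    simp [Finset.inter_eq_right.mpr hu]
  rw [← hcard, ← Finset.sum_add_distrib]
  apply Finset.sum_congr rfl
  intro j hj
  rw [Finsupp.tsub_apply]
  have : eU u j ≤ m j := by
    rw [eU_apply]
    by_cases h : j ∈ u
    · simp only [h, if_true]
      exact Nat.one_le_iff_ne_zero.mpr (Finsupp.mem_support_iff.mp (hu h))
    · simp [h]
  omega

lemma sqrt3_sq : Real.sqrt 3 * Real.sqrt 3 = 3 :=
  Real.mul_self_sqrt (by norm_num)

lemma aSeq_eq_bSeq : ∀ k, aSeq k = bSeq k := by
  have hs := sqrt3_sq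
  have hs0 : Real.sqrt 3 ≠ 0 := ne_of_gt (Real.sqrt_pos.mpr (by norm_num))
  set s := Real.sqrt 3 with hsdef
  intro k
  induction k using Nat.strong_induction_on with
  | _ k ih =>
    match k with
    | 0 =>
      show aSeq 0 = 1
      rw [aSeq]; field_simp; ring
    | 1 =>
      show aSeq 1 = 1
      rw [aSeq, div_eq_one_iff_eq (by positivity)]; ring
    | (k + 2) =>
      rw [bSeq, ← ih (k+1) (by omega), ← ih k (by omega)]
      show ((1 + s) ^ (k + 3) - (1 - s) ^ (k + 3)) / (2 ^ (k + 3) * s)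
        = ((1 + s) ^ (k + 2) - (1 - s) ^ (k + 2)) / (2 ^ (k + 2) * s)
          + ((1 + s) ^ (k + 1) - (1 - s) ^ (k + 1)) / (2 ^ (k + 1) * s) / 2
      have hnum : (1 + s) ^ (k + 3) - (1 - s) ^ (k + 3)
          = 2 * ((1 + s) ^ (k + 2) - (1 - s) ^ (k + 2))
            + 2 * ((1 + s) ^ (k + 1) - (1 - s) ^ (k + 1)) := by
        linear_combination ((1 + s) ^ (k + 1) - (1 - s) ^ (k + 1)) * hs
      have h2 : ((1 + s) ^ (k + 2) - (1 - s) ^ (k + 2)) / (2 ^ (k + 2) * s)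
          + ((1 + s) ^ (k + 1) - (1 - s) ^ (k + 1)) / (2 ^ (k + 1) * s) / 2
          = (2 * ((1 + s) ^ (k + 2) - (1 - s) ^ (k + 2))
            + 2 * ((1 + s) ^ (k + 1) - (1 - s) ^ (k + 1))) / (2 ^ (k + 3) * s) := by
        field_simp; ring
      rw [h2, hnum]

lemma arith_step (n S : ℕ) (h1 : 1 ≤ S) (h2 : S ≤ n) :
    (S : ℝ) * (Nat.factorial (n - 1) * bSeq (n - 1))
      + (S.choose 2 : ℝ) * (Nat.factorial (n - 2) * bSeq (n - 2))
    ≤ Nat.factorial n * bSeq n := by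
  obtain _ | _ | k := n
  · omega
  · have hS : S = 1 := by omega
    subst hS
    norm_num [bSeq]
  · 
    have hb1 := bSeq_pos (k + 1)
    have hb0 := bSeq_pos k
    simp only [Nat.add_sub_cancel, show k + 2 - 1 = k + 1 from rfl]
    have e1 : ((k + 2) * Nat.factorial (k + 1) : ℕ) = Nat.factorial (k + 2) :=
      (Nat.factorial_succ (k + 1)).symm
    have e2 : (Nat.choose (k + 2) 2) * 2 * Nat.factorial k = Nat.factorial (k + 2) := by
      have h := Nat.choose_mul_factorial_mul_factorial (show 2 ≤ k + 2 by omega)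
      simpa [Nat.factorial, mul_comm, mul_assoc, mul_left_comm] using h
    have hS : (S : ℝ) ≤ (k + 2 : ℕ) := by exact_mod_cast h2
    have hC : ((S.choose 2 : ℕ) : ℝ) ≤ ((Nat.choose (k + 2) 2 : ℕ) : ℝ) := by
      exact_mod_cast Nat.choose_le_choose 2 h2
    have A : (S : ℝ) * (Nat.factorial (k + 1) * bSeq (k + 1))
        ≤ (Nat.factorial (k + 2) : ℝ) * bSeq (k + 1) := by
      calc (S : ℝ) * (Nat.factorial (k + 1) * bSeq (k + 1))
          ≤ ((k + 2 : ℕ) : ℝ) * (Nat.factorial (k + 1) * bSeq (k + 1)) := by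
            apply mul_le_mul_of_nonneg_right hS (by positivity)
        _ = (Nat.factorial (k + 2) : ℝ) * bSeq (k + 1) := by
            rw [← e1]; push_cast; ring
    have B : (S.choose 2 : ℝ) * (Nat.factorial k * bSeq k)
        ≤ (Nat.factorial (k + 2) : ℝ) * (bSeq k / 2) := by
      calc (S.choose 2 : ℝ) * (Nat.factorial k * bSeq k)
          ≤ ((Nat.choose (k + 2) 2 : ℕ) : ℝ) * (Nat.factorial k * bSeq k) := by
            apply mul_le_mul_of_nonneg_right hC (by positivity)
        _ = (Nat.factorial (k + 2) : ℝ) * (bSeq k / 2) := by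
            rw [← e2]; push_cast; ring
    have hrw : (Nat.factorial (k + 2) : ℝ) * bSeq (k + 2)
        = (Nat.factorial (k + 2) : ℝ) * bSeq (k + 1)
          + (Nat.factorial (k + 2) : ℝ) * (bSeq k / 2) := by
      rw [bSeq]; ring
    rw [hrw]
    exact add_le_add A B

theorem stmt_15 (D : (ℕ →₀ ℕ) → ℕ) (hD0 : D 0 = 1)
    (hDrec : ∀ m : ℕ →₀ ℕ, m ≠ 0 →
      D m = ∑ u ∈ m.support.powerset.filter (fun u => 1 ≤ u.card ∧ u.card ≤ 2),
        D (m - eU u)) :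
    ∀ m : ℕ →₀ ℕ, (D m : ℝ) ≤ Nat.factorial (deg m) * aSeq (deg m) := by
  classical
  have key : ∀ n : ℕ, ∀ m : ℕ →₀ ℕ, deg m = n →
      (D m : ℝ) ≤ Nat.factorial n * bSeq n := by
    intro n
    induction n using Nat.strong_induction_on with
    | _ n ih =>
      intro m hm
      rcases Nat.eq_zero_or_pos n with h0 | hpos
      · subst h0
        have : m = 0 := deg_eq_zero hm
        subst this
        simp [hD0, bSeq, Nat.factorial]
      · have hm0 : m ≠ 0 := by
          rintro rfl
          simp [deg, Finsupp.sum] at hm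
          omega
        rw [hDrec m hm0]
        set s := m.support with hsdef
        have hF : s.powerset.filter (fun u => 1 ≤ u.card ∧ u.card ≤ 2)
            = s.powersetCard 1 ∪ s.powersetCard 2 := by
          ext u
          simp only [Finset.mem_filter, Finset.mem_powerset, Finset.mem_union,
            Finset.mem_powersetCard]
          constructor
          · rintro ⟨h1, h2, h3⟩
            have : u.card = 1 ∨ u.card = 2 := by omega
            tauto
          · rintro (⟨h1, h2⟩ | ⟨h1, h2⟩) <;> exact ⟨h1, by omega, by omega⟩
        have hdisj : Disjoint (s.powersetCard 1) (s.powersetCard 2) := by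
          rw [Finset.disjoint_left]
          intro u h1 h2
          rw [Finset.mem_powersetCard] at h1 h2
          omega
        rw [hF, Finset.sum_union hdisj]
        push_cast
        have hsub1 : ∀ u ∈ s.powersetCard 1,
            (D (m - eU u) : ℝ) ≤ Nat.factorial (n - 1) * bSeq (n - 1) := by
          intro u hu
          rw [Finset.mem_powersetCard] at hu
          have hd := deg_sub m u hu.1
          rw [hu.2, hm] at hd
          have hdeg : deg (m - eU u) = n - 1 := by omega
          exact ih (n - 1) (by omega) _ hdeg
        have hsub2 : ∀ u ∈ s.powersetCard 2,
            (D (m - eU u) : ℝ) ≤ Nat.factorial (n - 2) * bSeq (n - 2) := by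
          intro u hu
          rw [Finset.mem_powersetCard] at hu
          have hd := deg_sub m u hu.1
          rw [hu.2, hm] at hd
          have hdeg : deg (m - eU u) = n - 2 := by omega
          exact ih (n - 2) (by omega) _ hdeg
        have hc1 : (s.powersetCard 1).card = s.card := by
          rw [Finset.card_powersetCard, Nat.choose_one_right]
        have hc2 : (s.powersetCard 2).card = s.card.choose 2 := by
          rw [Finset.card_powersetCard]
        have b1 : ∑ u ∈ s.powersetCard 1, (D (m - eU u) : ℝ)
            ≤ (s.card : ℝ) * (Nat.factorial (n - 1) * bSeq (n - 1)) := by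
          calc ∑ u ∈ s.powersetCard 1, (D (m - eU u) : ℝ)
              ≤ ∑ _u ∈ s.powersetCard 1, (Nat.factorial (n - 1) * bSeq (n - 1) : ℝ) :=
                Finset.sum_le_sum hsub1
            _ = (s.card : ℝ) * (Nat.factorial (n - 1) * bSeq (n - 1)) := by
                rw [Finset.sum_const, hc1, nsmul_eq_mul]
        have b2 : ∑ u ∈ s.powersetCard 2, (D (m - eU u) : ℝ)
            ≤ (s.card.choose 2 : ℝ) * (Nat.factorial (n - 2) * bSeq (n - 2)) := by
          calc ∑ u ∈ s.powersetCard 2, (D (m - eU u) : ℝ)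
              ≤ ∑ _u ∈ s.powersetCard 2, (Nat.factorial (n - 2) * bSeq (n - 2) : ℝ) :=
                Finset.sum_le_sum hsub2
            _ = (s.card.choose 2 : ℝ) * (Nat.factorial (n - 2) * bSeq (n - 2)) := by
                rw [Finset.sum_const, hc2, nsmul_eq_mul]
        have hS1 : 1 ≤ s.card := by
          rw [Nat.one_le_iff_ne_zero, Ne, Finset.card_eq_zero]
          intro h
          exact hm0 (by rwa [← Finsupp.support_eq_empty, ← hsdef])
        have hSn : s.card ≤ n := by
          rw [← hm]; exact card_support_le_deg m
        calc ∑ u ∈ s.powersetCard 1, (D (m - eU u) : ℝ)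
              + ∑ u ∈ s.powersetCard 2, (D (m - eU u) : ℝ)
            ≤ (s.card : ℝ) * (Nat.factorial (n - 1) * bSeq (n - 1))
              + (s.card.choose 2 : ℝ) * (Nat.factorial (n - 2) * bSeq (n - 2)) :=
              add_le_add b1 b2
          _ ≤ Nat.factorial n * bSeq n := arith_step n s.card hS1 hSn
  intro m
  rw [aSeq_eq_bSeq]
  exact key (deg m) m rfl
end
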